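/- Let Π be a connected resolution refutation of CNF τ and S ⊊ var(Π). If t is the number of resolution steps in Π whose resolved variable belongs to S, then the refutation del_S(Π) produced by the variable-deletion algorithm (after contracting dummy weakenings) has size at most |Π| − t. -/
import Mathlib


abbrev Var := ℕ
abbrev Lit := Var × Bool
abbrev Clause := Finset Lit

def Clause.vars (C : Clause) : Finset Var := C.image Prod.fst

abbrev Assignment := Var → Option Bool

def litSat (σ : Assignment) (l : Lit) : Prop := σ l.1 = some l.2
def litFalse (σ : Assignment) (l : Lit) : Prop := σ l.1 = some (!l.2)

def Clause.falsified (σ : Assignment) (C : Clause) : Prop := ∀ l ∈ C, litFalse σ l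

def resolve (x : Var) (C D : Clause) : Clause :=
  C.filter (fun l => l.1 ≠ x) ∪ D.filter (fun l => l.1 ≠ x)

def resolvableOn (x : Var) (C D : Clause) : Prop :=
  (∃ a : Bool, (x, a) ∈ C ∧ (x, !a) ∈ D) ∧
    ∀ (y : Var) (b : Bool), y ≠ x → (y, b) ∈ C → (y, !b) ∉ D
structure ResDag (V : Type) where
  clause : V → Clause
  prem : V → Option (V × V × Var)
  res_ok : ∀ (v : V) (p : V × V × Var), prem v = some p →
    (∃ a : Bool, (p.2.2, a) ∈ clause p.1 ∧ (p.2.2, !a) ∈ clause p.2.1) ∧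
      clause v = resolve p.2.2 (clause p.1) (clause p.2.1)
  wf : WellFounded (fun u v : V =>
    ∃ p : V × V × Var, prem v = some p ∧ (u = p.1 ∨ u = p.2.1))

def ResDag.parent {V : Type} (G : ResDag V) (u v : V) : Prop :=
  ∃ p : V × V × Var, G.prem v = some p ∧ (u = p.1 ∨ u = p.2.1)

def ResDag.reach {V : Type} (G : ResDag V) : V → V → Prop :=
  Relation.ReflTransGen (ResDag.parent G)

def delS (S : Finset Var) (C : Clause) : Clause := C.filter (fun l => l.1 ∉ S)
structure DelRun {V : Type} (G : ResDag V) (S : Finset Var) where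
  deleted : V → Prop
  c' : V → Clause
  ax_del : ∀ v : V, G.prem v = none → (deleted v ↔ delS S (G.clause v) = ∅)
  ax_keep : ∀ v : V, G.prem v = none → ¬ deleted v → c' v = delS S (G.clause v)
  res_del : ∀ (v : V) (p : V × V × Var), G.prem v = some p →
    deleted p.1 → deleted p.2.1 → deleted v
  res_surv : ∀ (v : V) (p : V × V × Var), G.prem v = some p →
    (¬ deleted p.1 ∨ ¬ deleted p.2.1) → ¬ deleted v
  res_resolve : ∀ (v : V) (p : V × V × Var), G.prem v = some p →
    ¬ deleted p.1 → ¬ deleted p.2.1 → resolvableOn p.2.2 (c' p.1) (c' p.2.1) →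
    c' v = resolve p.2.2 (c' p.1) (c' p.2.1)
  res_weak : ∀ (v : V) (p : V × V × Var), G.prem v = some p →
    (¬ deleted p.1 ∨ ¬ deleted p.2.1) →
    ¬ (¬ deleted p.1 ∧ ¬ deleted p.2.1 ∧ resolvableOn p.2.2 (c' p.1) (c' p.2.1)) →
    ∃ u : V, (u = p.1 ∨ u = p.2.1) ∧ ¬ deleted u ∧
      c' u ⊆ delS S (G.clause v) ∧ c' v = c' u

lemma delrun_vars {V : Type} (G : ResDag V) (S : Finset Var) (R : DelRun G S) :
    ∀ v : V, ¬ R.deleted v → ∀ l ∈ R.c' v, l.1 ∉ S := by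
  intro v
  induction v using G.wf.induction with
  | _ v ih =>
    intro hv l hl
    cases hp : G.prem v with
    | none =>
      rw [R.ax_keep v hp hv, delS, Finset.mem_filter] at hl
      exact hl.2
    | some p =>
      have hsurv : ¬ R.deleted p.1 ∨ ¬ R.deleted p.2.1 := by
        by_contra h
        push_neg at h
        exact hv (R.res_del v p hp h.1 h.2)
      by_cases hres : ¬ R.deleted p.1 ∧ ¬ R.deleted p.2.1 ∧
          resolvableOn p.2.2 (R.c' p.1) (R.c' p.2.1)
      · rw [R.res_resolve v p hp hres.1 hres.2.1 hres.2.2, resolve,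
          Finset.mem_union, Finset.mem_filter, Finset.mem_filter] at hl
        rcases hl with ⟨hl, _⟩ | ⟨hl, _⟩
        · exact ih p.1 ⟨p, hp, Or.inl rfl⟩ hres.1 l hl
        · exact ih p.2.1 ⟨p, hp, Or.inr rfl⟩ hres.2.1 l hl
      · obtain ⟨u, _, _, hsub, heq⟩ := R.res_weak v p hp hsurv hres
        rw [heq] at hl
        have := hsub hl
        rw [delS, Finset.mem_filter] at this
        exact this.2

theorem stmt_7 {V : Type} [Fintype V] (G : ResDag V) (root : V)
    (hroot : G.clause root = ∅) (hconn : ∀ v : V, ResDag.reach G v root)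
    (S : Finset Var)
    (hSsub : ∀ x ∈ S, ∃ v : V, x ∈ Clause.vars (G.clause v))
    (hproper : ∃ y : Var, (∃ v : V, y ∈ Clause.vars (G.clause v)) ∧ y ∉ S)
    (R : DelRun G S) :
    -- the lines surviving after contracting dummy weakenings are the surviving
    -- axiom nodes and the surviving genuine resolution nodes; there are at most
    -- |Π| − t of them, where t is the number of resolution steps on variables in S
    Set.ncard {v : V | ¬ R.deleted v ∧ (G.prem v = none ∨
        ∃ p : V × V × Var, G.prem v = some p ∧ ¬ R.deleted p.1 ∧ ¬ R.deleted p.2.1 ∧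
          resolvableOn p.2.2 (R.c' p.1) (R.c' p.2.1))}
      ≤ Fintype.card V -
          Set.ncard {v : V | ∃ p : V × V × Var, G.prem v = some p ∧ p.2.2 ∈ S} := by
  set A := {v : V | ¬ R.deleted v ∧ (G.prem v = none ∨
        ∃ p : V × V × Var, G.prem v = some p ∧ ¬ R.deleted p.1 ∧ ¬ R.deleted p.2.1 ∧
          resolvableOn p.2.2 (R.c' p.1) (R.c' p.2.1))} with hA
  set B := {v : V | ∃ p : V × V × Var, G.prem v = some p ∧ p.2.2 ∈ S} with hB
  have hdisj : Disjoint A B := by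
    rw [Set.disjoint_left]
    rintro v ⟨hv, hcase⟩ ⟨p, hp, hpS⟩
    rcases hcase with h | ⟨p', hp', h1, h2, hres⟩
    · simp [hp] at h
    · rw [hp] at hp'
      injection hp' with hpe
      subst hpe
      obtain ⟨⟨a, ha, _⟩, _⟩ := hres
      exact delrun_vars G S R p.1 h1 (p.2.2, a) ha hpS
  have hfin : (A ∪ B).Finite := Set.toFinite _
  have h1 : A.ncard + B.ncard = (A ∪ B).ncard :=
    (Set.ncard_union_eq hdisj (Set.toFinite _) (Set.toFinite _)).symm
  have h2 : (A ∪ B).ncard ≤ Fintype.card V := by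
    calc (A ∪ B).ncard ≤ (Set.univ : Set V).ncard :=
          Set.ncard_le_ncard (Set.subset_univ _) (Set.toFinite _)
      _ = Fintype.card V := by rw [Set.ncard_univ, Nat.card_eq_fintype_card]
  omega
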